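/- Let n, rₙ ∈ ℕ, let p be a probability vector on {1,…,n}, and let Z ~ Multinomial(n·rₙ, p). Then for any μ > 0, P[D(Z/(n·rₙ) ‖ p) ≥ (Δ(rₙ)+μ)/rₙ] ≤ √(2πe·n·rₙ)·e^{−nμ}, where D is the KL divergence and Δ(r) = inf_{q>2}{(1−1/q)Ψ(r) + (1/q)log[1 + (2π)^{−q/2}ζ(q/2)]} with Ψ(t) = (1+t)log(1+t) − t·log t. -/

import Mathlib

open Real

/-- `Ψ(t) = (1+t)log(1+t) − t·log t`. -/
noncomputable def Psi (t : ℝ) : ℝ := (1 + t) * Real.log (1 + t) - t * Real.log t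

/-- Riemann's zeta function for real arguments, `ζ(s) = ∑_{j=1}^∞ j^{-s}`. -/
noncomputable def zetaReal (s : ℝ) : ℝ := ∑' j : ℕ, ((j : ℝ) + 1) ^ (-s)

/-- `Δ(r) = inf_{q>2} {(1−1/q)·Ψ(r) + (1/q)·log[1 + (2π)^{−q/2}ζ(q/2)]}`. -/
noncomputable def Delta (r : ℝ) : ℝ :=
  sInf {x : ℝ | ∃ q : ℝ, 2 < q ∧
    x = (1 - 1/q) * Psi r + (1/q) * Real.log (1 + (2 * π) ^ (-q/2) * zetaReal (q/2))}

open Finset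

noncomputable def wfn (m : ℕ) : ℝ := if m = 0 then 1 else (2 * π * m) ^ (-(1/2) : ℝ)

lemma wfn_nonneg (m : ℕ) : 0 ≤ wfn m := by
  unfold wfn; split
  · norm_num
  · positivity

lemma stirling_ge (m : ℕ) (hm : 1 ≤ m) : Real.sqrt π ≤ Stirling.stirlingSeq m := by
  obtain ⟨k, rfl⟩ := Nat.exists_eq_add_of_le hm
  have h1 : Filter.Tendsto (Stirling.stirlingSeq ∘ Nat.succ) Filter.atTop (nhds (Real.sqrt π)) :=
    Stirling.tendsto_stirlingSeq_sqrt_pi.comp (Filter.tendsto_add_atTop_nat 1)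
  have := Stirling.stirlingSeq'_antitone.le_of_tendsto h1 k
  simpa [Nat.succ_eq_add_one, Nat.add_comm] using this

lemma stirling_le (m : ℕ) (hm : 1 ≤ m) : Stirling.stirlingSeq m ≤ Real.exp 1 / Real.sqrt 2 := by
  obtain ⟨k, rfl⟩ := Nat.exists_eq_add_of_le hm
  have := Stirling.stirlingSeq'_antitone (Nat.zero_le k)
  simp only [Function.comp, Nat.succ_eq_add_one, Nat.zero_add] at this
  rw [← Stirling.stirlingSeq_one]
  simpa [Nat.add_comm] using this

lemma fact_eq (m : ℕ) (hm : 1 ≤ m) : (m.factorial : ℝ) =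
    Stirling.stirlingSeq m * (Real.sqrt (2 * m) * ((m : ℝ) / Real.exp 1) ^ m) := by
  have hd : Real.sqrt (2 * m) * ((m : ℝ) / Real.exp 1) ^ m ≠ 0 := by
    have : (0:ℝ) < m := by exact_mod_cast hm
    positivity
  rw [Stirling.stirlingSeq, div_mul_cancel₀ _ hd]

lemma fact_lower (m : ℕ) (hm : 1 ≤ m) :
    Real.sqrt (2 * π * m) * ((m : ℝ) / Real.exp 1) ^ m ≤ (m.factorial : ℝ) := by
  rw [fact_eq m hm]
  have h1 : Real.sqrt (2 * π * m) = Real.sqrt π * Real.sqrt (2 * m) := by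
    rw [← Real.sqrt_mul (le_of_lt pi_pos)]; ring_nf
  rw [h1, mul_assoc]
  have hm' : (0:ℝ) < m := by exact_mod_cast hm
  have hnn : 0 ≤ Real.sqrt (2 * m) * ((m : ℝ) / Real.exp 1) ^ m := by positivity
  exact mul_le_mul_of_nonneg_right (stirling_ge m hm) hnn

lemma fact_upper (m : ℕ) (hm : 1 ≤ m) :
    (m.factorial : ℝ) ≤ Real.exp 1 * Real.sqrt m * ((m : ℝ) / Real.exp 1) ^ m := by
  rw [fact_eq m hm]
  have hm' : (0:ℝ) < m := by exact_mod_cast hm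
  have h1 : Real.sqrt (2 * m) = Real.sqrt 2 * Real.sqrt m := Real.sqrt_mul (by norm_num) _
  have hnn : 0 ≤ Real.sqrt (2 * m) * ((m : ℝ) / Real.exp 1) ^ m := by positivity
  calc Stirling.stirlingSeq m * (Real.sqrt (2 * m) * ((m : ℝ) / Real.exp 1) ^ m)
      ≤ (Real.exp 1 / Real.sqrt 2) * (Real.sqrt (2 * m) * ((m : ℝ) / Real.exp 1) ^ m) :=
        mul_le_mul_of_nonneg_right (stirling_le m hm) hnn
    _ = Real.exp 1 * Real.sqrt m * ((m : ℝ) / Real.exp 1) ^ m := by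
        rw [h1]
        have h2 : Real.sqrt 2 ≠ 0 := by positivity
        field_simp

-- L3
lemma pow_self_le (m : ℕ) :
    (m : ℝ) ^ m ≤ Real.exp 1 ^ m * wfn m * (m.factorial : ℝ) := by
  rcases Nat.eq_zero_or_pos m with rfl | hm
  · simp [wfn]
  · have hm' : (0:ℝ) < m := by exact_mod_cast hm
    have hw : wfn m = (2 * π * m) ^ (-(1/2) : ℝ) := by
      unfold wfn; rw [if_neg (Nat.pos_iff_ne_zero.mp hm)]
    have h2 : (0:ℝ) < 2 * π * m := by positivity
    have hmid : (2 * π * m) ^ (-(1/2) : ℝ) * Real.sqrt (2 * π * m) = 1 := by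
      rw [Real.sqrt_eq_rpow, ← Real.rpow_add h2]; norm_num
    have hee : Real.exp 1 ^ m * ((m:ℝ)/Real.exp 1)^m = (m:ℝ)^m := by
      rw [div_pow]; field_simp
    have key : Real.exp 1 ^ m * wfn m * (Real.sqrt (2 * π * m) * ((m : ℝ) / Real.exp 1) ^ m)
        = (m:ℝ) ^ m := by
      rw [hw]
      calc Real.exp 1 ^ m * (2 * π * m) ^ (-(1/2) : ℝ) * (Real.sqrt (2 * π * m) * ((m : ℝ) / Real.exp 1) ^ m)
          = ((2 * π * m) ^ (-(1/2) : ℝ) * Real.sqrt (2 * π * m)) * (Real.exp 1 ^ m * ((m:ℝ)/Real.exp 1)^m) := by ring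
        _ = (m:ℝ) ^ m := by rw [hmid, hee, one_mul]
    rw [← key]
    have hnn : 0 ≤ Real.exp 1 ^ m * wfn m := by
      have := wfn_nonneg m; positivity
    exact mul_le_mul_of_nonneg_left (fact_lower m hm) hnn

-- L4
lemma Qbound (n N : ℕ) (hN : 1 ≤ N) (z : Fin n → ℕ) (hz : ∑ i, z i = N) :
    ((N.factorial : ℝ) / ∏ i, ((z i).factorial : ℝ)) * ∏ i, ((z i : ℝ) / N) ^ (z i)
      ≤ Real.exp 1 * Real.sqrt N * ∏ i, wfn (z i) := by
  have hN' : (0:ℝ) < N := by exact_mod_cast hN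
  have hfpos : (0:ℝ) < ∏ i, ((z i).factorial : ℝ) := by
    apply Finset.prod_pos; intro i _; exact_mod_cast (z i).factorial_pos
  -- rewrite the product
  have hprod : ∏ i, ((z i : ℝ) / N) ^ (z i) = (∏ i, (z i : ℝ) ^ (z i)) / (N:ℝ) ^ N := by
    rw [← hz]
    rw [← Finset.prod_pow_eq_pow_sum, ← Finset.prod_div_distrib]
    congr 1; ext i; rw [div_pow]
  rw [hprod]
  rw [div_mul_div_comm, div_le_iff₀ (by positivity)]
  -- now: N! * ∏ (z i)^(z i) ≤ (e √N ∏ wfn) * (∏ fact * N^N)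
  have hA : ∏ i, (z i : ℝ) ^ (z i) ≤ Real.exp 1 ^ N * (∏ i, wfn (z i)) * ∏ i, ((z i).factorial : ℝ) := by
    have := Finset.prod_le_prod (s := Finset.univ)
      (f := fun i => (z i : ℝ) ^ (z i))
      (g := fun i => Real.exp 1 ^ (z i) * wfn (z i) * ((z i).factorial : ℝ))
      (fun i _ => by positivity) (fun i _ => pow_self_le (z i))
    calc ∏ i, (z i : ℝ) ^ (z i)
        ≤ ∏ i, (Real.exp 1 ^ (z i) * wfn (z i) * ((z i).factorial : ℝ)) := this
      _ = (∏ i, Real.exp 1 ^ (z i)) * (∏ i, wfn (z i)) * ∏ i, ((z i).factorial : ℝ) := by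
          rw [← Finset.prod_mul_distrib, ← Finset.prod_mul_distrib]
      _ = Real.exp 1 ^ N * (∏ i, wfn (z i)) * ∏ i, ((z i).factorial : ℝ) := by
          rw [Finset.prod_pow_eq_pow_sum, hz]
  have hB : (N.factorial : ℝ) ≤ Real.exp 1 * Real.sqrt N * ((N:ℝ) / Real.exp 1) ^ N :=
    fact_upper N hN
  have hwnn : 0 ≤ ∏ i, wfn (z i) := Finset.prod_nonneg (fun i _ => wfn_nonneg (z i))
  calc (N.factorial : ℝ) * ∏ i, (z i : ℝ) ^ (z i)
      ≤ (Real.exp 1 * Real.sqrt N * ((N:ℝ) / Real.exp 1) ^ N) *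
        (Real.exp 1 ^ N * (∏ i, wfn (z i)) * ∏ i, ((z i).factorial : ℝ)) := by
        apply mul_le_mul hB hA (Finset.prod_nonneg (fun i _ => by positivity)) (by positivity)
    _ = Real.exp 1 * Real.sqrt N * (∏ i, wfn (z i)) * ((∏ i, ((z i).factorial : ℝ)) * (N:ℝ) ^ N) := by
        rw [div_pow]
        have : Real.exp 1 ^ N ≠ 0 := by positivity
        field_simp

-- L5
lemma prob_eq (n N : ℕ) (hN : 1 ≤ N) (p : Fin n → ℝ) (hp : ∀ i, 0 < p i)
    (z : Fin n → ℕ) :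
    ∏ i, p i ^ z i =
      Real.exp (-(N:ℝ) * ∑ i, ((z i : ℝ) / N) * Real.log (((z i : ℝ) / N) / p i)) *
      ∏ i, ((z i : ℝ) / N) ^ (z i) := by
  have hN' : (0:ℝ) < N := by exact_mod_cast hN
  have : -(N:ℝ) * ∑ i, ((z i : ℝ) / N) * Real.log (((z i : ℝ) / N) / p i)
      = ∑ i, (-(z i : ℝ)) * Real.log (((z i : ℝ) / N) / p i) := by
    rw [Finset.mul_sum]
    congr 1; ext i
    field_simp
  rw [this, Real.exp_sum, ← Finset.prod_mul_distrib]
  congr 1; ext i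
  rcases Nat.eq_zero_or_pos (z i) with h0 | hpos
  · simp [h0]
  · have hz0 : (0:ℝ) < (z i : ℝ) := by exact_mod_cast hpos
    have hz' : (0:ℝ) < (z i : ℝ) / N := by positivity
    have key : ∀ x : ℝ, 0 < x → Real.exp ((z i : ℝ) * Real.log x) = x ^ z i := by
      intro x hx
      rw [Real.exp_nat_mul, Real.exp_log hx]
    rw [Real.log_div (ne_of_gt hz') (ne_of_gt (hp i))]
    have harg : (-(z i : ℝ)) * (Real.log ((z i : ℝ) / N) - Real.log (p i))
        = (z i : ℝ) * Real.log (p i) - (z i : ℝ) * Real.log ((z i : ℝ) / N) := by ring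
    rw [harg, Real.exp_sub, key _ (hp i), key _ hz']
    rw [div_mul_cancel₀]
    positivity

lemma zeta_partial_le (q : ℝ) (hq : 2 < q) (N : ℕ) :
    ∑ i ∈ Finset.range N, ((i : ℝ) + 1) ^ (-(q/2)) ≤ zetaReal (q/2) := by
  have hsum : Summable (fun j : ℕ => ((j : ℝ) + 1) ^ (-(q/2))) := by
    have h1 : Summable (fun j : ℕ => ((j : ℝ)) ^ (-(q/2))) :=
      Real.summable_nat_rpow.mpr (by linarith)
    have := (summable_nat_add_iff 1).mpr h1
    simpa using this
  exact Summable.sum_le_tsum _ (fun i _ => by positivity) hsum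

lemma zetaReal_nonneg (q : ℝ) : 0 ≤ zetaReal q :=
  tsum_nonneg (fun j => by positivity)

lemma count_bound (n r : ℕ) (hn : 1 ≤ n) (hr : 1 ≤ r) (q : ℝ) (hq : 2 < q) :
    ∑ z ∈ Finset.Nat.antidiagonalTuple n (n * r), ∏ i, wfn (z i)
      ≤ Real.exp ((n : ℝ) * ((1 - 1/q) * Psi r
          + (1/q) * Real.log (1 + (2 * π) ^ (-q/2) * zetaReal (q/2)))) := by
  set N := n * r with hNdef
  have hN : 1 ≤ N := Nat.one_le_iff_ne_zero.mpr (by positivity)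
  have hr' : (1:ℝ) ≤ r := by exact_mod_cast hr
  have hrpos : (0:ℝ) < r := by linarith
  set s : ℝ := 1 - 1/q with hsdef
  have hq0 : (0:ℝ) < q := by linarith
  have hs0 : 0 < s := by
    have : 1/q < 1/2 := by rw [div_lt_div_iff₀ hq0 (by norm_num)]; linarith
    simp only [hsdef]; linarith
  have hs1 : s < 1 := by
    have : 0 < 1/q := by positivity
    simp only [hsdef]; linarith
  set x : ℝ := r / (1 + r) with hxdef
  have hx0 : 0 < x := by positivity
  have hx1 : x < 1 := by
    rw [hxdef, div_lt_one (by linarith)]; linarith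
  set u : ℝ := x ^ s with hudef
  have hu0 : 0 < u := Real.rpow_pos_of_pos hx0 s
  have hu1 : u < 1 := Real.rpow_lt_one (le_of_lt hx0) hx1 hs0
  set c : ℝ := (2 * π) ^ (-q/2) * zetaReal (q/2) with hcdef
  have hc0 : 0 ≤ c := mul_nonneg (by positivity) (zetaReal_nonneg _)
  -- Step A
  have stepA : ∑ z ∈ Finset.Nat.antidiagonalTuple n N, ∏ i, wfn (z i)
      ≤ (1 / u ^ N) * (∑ m ∈ Finset.range (N+1), wfn m * u ^ m) ^ n := by
    have hterm : ∀ z ∈ Finset.Nat.antidiagonalTuple n N,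
        ∏ i, wfn (z i) = (1 / u ^ N) * ∏ i, (wfn (z i) * u ^ (z i)) := by
      intro z hz
      rw [Finset.Nat.mem_antidiagonalTuple] at hz
      rw [Finset.prod_mul_distrib, Finset.prod_pow_eq_pow_sum, hz]
      field_simp
    rw [Finset.sum_congr rfl hterm, ← Finset.mul_sum]
    apply mul_le_mul_of_nonneg_left _ (by positivity)
    have hsub : Finset.Nat.antidiagonalTuple n N ⊆
        Fintype.piFinset (fun _ : Fin n => Finset.range (N+1)) := by
      intro z hz
      rw [Finset.Nat.mem_antidiagonalTuple] at hz
      rw [Fintype.mem_piFinset]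
      intro i
      rw [Finset.mem_range, Nat.lt_succ_iff, ← hz]
      exact Finset.single_le_sum (fun j _ => Nat.zero_le _) (Finset.mem_univ i)
    calc ∑ z ∈ Finset.Nat.antidiagonalTuple n N, ∏ i, (wfn (z i) * u ^ (z i))
        ≤ ∑ z ∈ Fintype.piFinset (fun _ : Fin n => Finset.range (N+1)),
              ∏ i, (wfn (z i) * u ^ (z i)) := by
          apply Finset.sum_le_sum_of_subset_of_nonneg hsub
          intro z _ _
          exact Finset.prod_nonneg (fun i _ => mul_nonneg (wfn_nonneg _) (by positivity))
      _ = ∏ _i : Fin n, (∑ m ∈ Finset.range (N+1), wfn m * u ^ m) := by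
          rw [Finset.prod_univ_sum]
      _ = (∑ m ∈ Finset.range (N+1), wfn m * u ^ m) ^ n := by
          rw [Finset.prod_const, Finset.card_univ, Fintype.card_fin]
  -- Step B : Hölder
  have hpq : Real.HolderConjugate (1/s) q := by
    rw [Real.holderConjugate_iff]; constructor
    · rw [lt_div_iff₀ hs0, one_mul]; exact hs1
    · rw [one_div, inv_inv, hsdef]
      field_simp
      ring
  have hxm : ∀ m : ℕ, (u ^ m) ^ (1/s : ℝ) = x ^ m := by
    intro m
    rw [hudef, ← Real.rpow_natCast (x ^ s) m, ← Real.rpow_mul (le_of_lt hx0),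
      ← Real.rpow_mul (le_of_lt hx0), ← Real.rpow_natCast x m]
    congr 1
    field_simp
  have hgeom : ∑ m ∈ Finset.range (N+1), x ^ m ≤ 1 + r := by
    have hsum : ∑ m ∈ Finset.range (N+1), x ^ m ≤ ∑' m : ℕ, x ^ m :=
      Summable.sum_le_tsum _ (fun i _ => by positivity)
        (summable_geometric_of_lt_one (le_of_lt hx0) hx1)
    rw [tsum_geometric_of_lt_one (le_of_lt hx0) hx1] at hsum
    have h1x : 1 - x = 1 / (1 + r) := by
      rw [hxdef]; field_simp; ring
    rw [h1x] at hsum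
    simpa using hsum
  have hwq : ∑ m ∈ Finset.range (N+1), (wfn m) ^ (q : ℝ) ≤ 1 + c := by
    rw [Finset.sum_range_succ']
    have h0 : (wfn 0) ^ (q:ℝ) = 1 := by simp [wfn]
    rw [h0]
    have hterm : ∀ i : ℕ, (wfn (i+1)) ^ (q:ℝ) = (2*π) ^ (-q/2) * ((i:ℝ)+1) ^ (-(q/2)) := by
      intro i
      have hne : (i:ℕ) + 1 ≠ 0 := Nat.succ_ne_zero i
      have hpos : (0:ℝ) < 2 * π * ((i:ℕ)+1 : ℕ) := by positivity
      rw [wfn, if_neg hne, ← Real.rpow_mul (le_of_lt hpos)]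
      have : (2 * π * ((i:ℕ)+1:ℕ) : ℝ) = (2*π) * ((i:ℝ)+1) := by push_cast; ring
      rw [this, Real.mul_rpow (by positivity) (by positivity)]
      norm_num
      congr 1 <;> ring
    calc (∑ i ∈ Finset.range N, (wfn (i+1)) ^ (q:ℝ)) + 1
        = 1 + (2*π) ^ (-q/2) * ∑ i ∈ Finset.range N, ((i:ℝ)+1) ^ (-(q/2)) := by
          rw [Finset.sum_congr rfl (fun i _ => hterm i), ← Finset.mul_sum]; ring
      _ ≤ 1 + c := by
          rw [hcdef]
          have := zeta_partial_le q hq N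
          nlinarith [Real.rpow_nonneg (by positivity : (0:ℝ) ≤ 2*π) (-q/2)]
  have stepB : ∑ m ∈ Finset.range (N+1), wfn m * u ^ m
      ≤ (1 + (r:ℝ)) ^ (s : ℝ) * (1 + c) ^ (1/q : ℝ) := by
    have hH := Real.inner_le_Lp_mul_Lq_of_nonneg (Finset.range (N+1))
      (f := fun m => u ^ m) (g := fun m => wfn m) hpq
      (fun i _ => by positivity) (fun i _ => wfn_nonneg i)
    have hcomm : ∑ m ∈ Finset.range (N+1), wfn m * u ^ m
        = ∑ m ∈ Finset.range (N+1), u ^ m * wfn m := by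
      apply Finset.sum_congr rfl; intros; ring
    rw [hcomm]
    refine le_trans hH ?_
    have e1 : ∑ i ∈ Finset.range (N+1), ((fun m => u ^ m) i) ^ (1/s:ℝ)
        = ∑ m ∈ Finset.range (N+1), x ^ m := by
      apply Finset.sum_congr rfl; intro m _; exact hxm m
    rw [e1]
    have h1s : (1 : ℝ) / (1/s) = s := by field_simp
    rw [h1s]
    apply mul_le_mul
    · exact Real.rpow_le_rpow (Finset.sum_nonneg (fun i _ => by positivity)) hgeom (le_of_lt hs0)
    · exact Real.rpow_le_rpow (Finset.sum_nonneg (fun i _ => Real.rpow_nonneg (wfn_nonneg i) q)) hwq (by positivity)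
    · exact Real.rpow_nonneg (Finset.sum_nonneg (fun i _ => Real.rpow_nonneg (wfn_nonneg i) q)) _
    · exact Real.rpow_nonneg (by positivity) _
  -- Step C : combine
  have hTnn : 0 ≤ ∑ m ∈ Finset.range (N+1), wfn m * u ^ m :=
    Finset.sum_nonneg (fun i _ => mul_nonneg (wfn_nonneg i) (by positivity))
  have stepC : (1 / u ^ N) * (∑ m ∈ Finset.range (N+1), wfn m * u ^ m) ^ n
      ≤ (1 / u ^ N) * ((1 + (r:ℝ)) ^ (s : ℝ) * (1 + c) ^ (1/q : ℝ)) ^ n := by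
    apply mul_le_mul_of_nonneg_left _ (by positivity)
    exact pow_le_pow_left₀ hTnn stepB n
  refine le_trans (le_trans stepA stepC) (le_of_eq ?_)
  -- now pure identity
  have hlogx : Real.log x = Real.log r - Real.log (1 + r) := by
    rw [hxdef, Real.log_div (ne_of_gt hrpos) (by positivity)]
  have huN : u ^ N = Real.exp ((s * N) * Real.log x) := by
    rw [hudef, ← Real.rpow_natCast (x ^ s) N, ← Real.rpow_mul (le_of_lt hx0),
      Real.rpow_def_of_pos hx0]
    ring_nf
  have h1r : (1 + (r:ℝ)) ^ (s : ℝ) = Real.exp (s * Real.log (1 + r)) := by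
    rw [Real.rpow_def_of_pos (by positivity)]; ring_nf
  have h1c : (1 + c) ^ (1/q : ℝ) = Real.exp ((1/q) * Real.log (1 + c)) := by
    rw [Real.rpow_def_of_pos (by positivity)]; ring_nf
  rw [huN, h1r, h1c, ← Real.exp_add, ← Real.exp_nat_mul, one_div (Real.exp _),
    ← Real.exp_neg, ← Real.exp_add]
  congr 1
  have hNr : ((N:ℕ) : ℝ) = (n : ℝ) * r := by rw [hNdef]; push_cast; ring
  rw [hlogx, hNr]
  simp only [Psi, hsdef]
  ring

lemma main_bound (n r : ℕ) (hn : 1 ≤ n) (hr : 1 ≤ r) (p : Fin n → ℝ) (hp : ∀ i, 0 < p i)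
    (μ : ℝ) (q : ℝ) (hq : 2 < q) :
    ∑ z ∈ (Finset.Nat.antidiagonalTuple n (n * r)).filter
        (fun z => (Delta r + μ) / r ≤
          ∑ i, ((z i : ℝ) / (n * r)) * Real.log (((z i : ℝ) / (n * r)) / p i)),
        (((n * r).factorial : ℝ) / ∏ i, ((z i).factorial : ℝ)) * ∏ i, p i ^ z i
      ≤ (Real.exp 1 * Real.sqrt ((n:ℝ) * r)) * Real.exp (-((n:ℝ) * (Delta r + μ)))
        * Real.exp ((n : ℝ) * ((1 - 1/q) * Psi r
            + (1/q) * Real.log (1 + (2 * π) ^ (-q/2) * zetaReal (q/2)))) := by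
  have hN : 1 ≤ n * r := Nat.one_le_iff_ne_zero.mpr (by positivity)
  have hcast : ((n * r : ℕ) : ℝ) = (n : ℝ) * r := by push_cast; ring
  have hr' : (0:ℝ) < r := by exact_mod_cast hr
  have hn' : (0:ℝ) < n := by exact_mod_cast hn
  have hN' : (0:ℝ) < (n:ℝ) * r := by positivity
  -- per-term bound
  have hterm : ∀ z ∈ (Finset.Nat.antidiagonalTuple n (n * r)).filter
        (fun z => (Delta r + μ) / r ≤
          ∑ i, ((z i : ℝ) / (n * r)) * Real.log (((z i : ℝ) / (n * r)) / p i)),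
      (((n * r).factorial : ℝ) / ∏ i, ((z i).factorial : ℝ)) * ∏ i, p i ^ z i
        ≤ Real.exp (-((n:ℝ) * (Delta r + μ))) *
          (Real.exp 1 * Real.sqrt ((n:ℝ) * r) * ∏ i, wfn (z i)) := by
    intro z hz
    rw [Finset.mem_filter, Finset.Nat.mem_antidiagonalTuple] at hz
    obtain ⟨hz1, hz2⟩ := hz
    have hpe := prob_eq n (n*r) hN p hp z
    rw [hcast] at hpe
    rw [hpe]
    have hfnn : (0:ℝ) ≤ ((n * r).factorial : ℝ) / ∏ i, ((z i).factorial : ℝ) := by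
      have : (0:ℝ) < ∏ i, ((z i).factorial : ℝ) :=
        Finset.prod_pos (fun i _ => by exact_mod_cast (z i).factorial_pos)
      positivity
    calc (((n * r).factorial : ℝ) / ∏ i, ((z i).factorial : ℝ)) *
          (Real.exp (-((n:ℝ) * r) * ∑ i, ((z i : ℝ) / ((n:ℝ) * r)) *
              Real.log (((z i : ℝ) / ((n:ℝ) * r)) / p i)) *
            ∏ i, ((z i : ℝ) / ((n:ℝ) * r)) ^ (z i))
        = Real.exp (-((n:ℝ) * r) * ∑ i, ((z i : ℝ) / ((n:ℝ) * r)) *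
              Real.log (((z i : ℝ) / ((n:ℝ) * r)) / p i)) *
          ((((n * r).factorial : ℝ) / ∏ i, ((z i).factorial : ℝ)) *
            ∏ i, ((z i : ℝ) / ((n:ℝ) * r)) ^ (z i)) := by ring
      _ ≤ Real.exp (-((n:ℝ) * (Delta r + μ))) *
          (Real.exp 1 * Real.sqrt ((n:ℝ) * r) * ∏ i, wfn (z i)) := by
          apply mul_le_mul
          · rw [Real.exp_le_exp]
            have h1 : ((n:ℝ) * r) * ((Delta r + μ) / r) = (n:ℝ) * (Delta r + μ) := by
              field_simp
            have h2 : ((n:ℝ) * r) * ((Delta r + μ) / r)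
                ≤ ((n:ℝ) * r) * ∑ i, ((z i : ℝ) / ((n:ℝ) * r)) *
                    Real.log (((z i : ℝ) / ((n:ℝ) * r)) / p i) :=
              mul_le_mul_of_nonneg_left hz2 (le_of_lt hN')
            rw [h1] at h2
            linarith
          · have hQ := Qbound n (n*r) hN z hz1
            rw [hcast] at hQ
            exact hQ
          · exact mul_nonneg hfnn (Finset.prod_nonneg (fun i _ => by positivity))
          · positivity
  calc ∑ z ∈ (Finset.Nat.antidiagonalTuple n (n * r)).filter
        (fun z => (Delta r + μ) / r ≤
          ∑ i, ((z i : ℝ) / (n * r)) * Real.log (((z i : ℝ) / (n * r)) / p i)),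
        (((n * r).factorial : ℝ) / ∏ i, ((z i).factorial : ℝ)) * ∏ i, p i ^ z i
      ≤ ∑ z ∈ (Finset.Nat.antidiagonalTuple n (n * r)).filter
        (fun z => (Delta r + μ) / r ≤
          ∑ i, ((z i : ℝ) / (n * r)) * Real.log (((z i : ℝ) / (n * r)) / p i)),
        Real.exp (-((n:ℝ) * (Delta r + μ))) *
          (Real.exp 1 * Real.sqrt ((n:ℝ) * r) * ∏ i, wfn (z i)) :=
        Finset.sum_le_sum hterm
    _ = Real.exp (-((n:ℝ) * (Delta r + μ))) * (Real.exp 1 * Real.sqrt ((n:ℝ) * r)) *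
        ∑ z ∈ (Finset.Nat.antidiagonalTuple n (n * r)).filter
        (fun z => (Delta r + μ) / r ≤
          ∑ i, ((z i : ℝ) / (n * r)) * Real.log (((z i : ℝ) / (n * r)) / p i)),
          ∏ i, wfn (z i) := by
        rw [Finset.mul_sum]
        apply Finset.sum_congr rfl
        intros; ring
    _ ≤ Real.exp (-((n:ℝ) * (Delta r + μ))) * (Real.exp 1 * Real.sqrt ((n:ℝ) * r)) *
        ∑ z ∈ Finset.Nat.antidiagonalTuple n (n * r), ∏ i, wfn (z i) := by
        apply mul_le_mul_of_nonneg_left _ (by positivity)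
        apply Finset.sum_le_sum_of_subset_of_nonneg (Finset.filter_subset _ _)
        intro z _ _
        exact Finset.prod_nonneg (fun i _ => wfn_nonneg _)
    _ ≤ Real.exp (-((n:ℝ) * (Delta r + μ))) * (Real.exp 1 * Real.sqrt ((n:ℝ) * r)) *
        Real.exp ((n : ℝ) * ((1 - 1/q) * Psi r
          + (1/q) * Real.log (1 + (2 * π) ^ (-q/2) * zetaReal (q/2)))) := by
        apply mul_le_mul_of_nonneg_left (count_bound n r hn hr q hq) (by positivity)
    _ = (Real.exp 1 * Real.sqrt ((n:ℝ) * r)) * Real.exp (-((n:ℝ) * (Delta r + μ)))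
        * Real.exp ((n : ℝ) * ((1 - 1/q) * Psi r
            + (1/q) * Real.log (1 + (2 * π) ^ (-q/2) * zetaReal (q/2)))) := by ring

theorem stmt_17 (n r : ℕ) (hn : 1 ≤ n) (hr : 1 ≤ r)
    (p : Fin n → ℝ) (hp : ∀ i, 0 < p i) (hps : ∑ i, p i = 1)
    (μ : ℝ) (hμ : 0 < μ) :
    ∑ z ∈ (Finset.Nat.antidiagonalTuple n (n * r)).filter
        (fun z => (Delta r + μ) / r ≤
          ∑ i, ((z i : ℝ) / (n * r)) * Real.log (((z i : ℝ) / (n * r)) / p i)),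
        (((n * r).factorial : ℝ) / ∏ i, ((z i).factorial : ℝ)) * ∏ i, p i ^ z i
      ≤ Real.sqrt (2 * π * Real.exp 1 * (n * r)) * Real.exp (-(n * μ)) := by
  have hn' : (0:ℝ) < n := by exact_mod_cast hn
  have hr' : (0:ℝ) < r := by exact_mod_cast hr
  set L := ∑ z ∈ (Finset.Nat.antidiagonalTuple n (n * r)).filter
        (fun z => (Delta r + μ) / r ≤
          ∑ i, ((z i : ℝ) / (n * r)) * Real.log (((z i : ℝ) / (n * r)) / p i)),
        (((n * r).factorial : ℝ) / ∏ i, ((z i).factorial : ℝ)) * ∏ i, p i ^ z i with hL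
  set P : ℝ := Real.exp 1 * Real.sqrt ((n:ℝ) * r) * Real.exp (-((n:ℝ) * μ)) with hPdef
  have hP0 : 0 < P := by positivity
  -- P ≤ RHS
  have hPB : P ≤ Real.sqrt (2 * π * Real.exp 1 * (n * r)) * Real.exp (-(n * μ)) := by
    apply mul_le_mul_of_nonneg_right _ (le_of_lt (Real.exp_pos _))
    have h1 : Real.sqrt (Real.exp 1 ^ 2 * ((n:ℝ) * r))
        = Real.exp 1 * Real.sqrt ((n:ℝ) * r) := by
      rw [Real.sqrt_mul (sq_nonneg _), Real.sqrt_sq (le_of_lt (Real.exp_pos 1))]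
    rw [← h1]
    apply Real.sqrt_le_sqrt
    have he : Real.exp 1 < 2 * π := by
      have h2 : Real.exp 1 < 2.7182818286 := Real.exp_one_lt_d9
      have h3 : (3:ℝ) < π := Real.pi_gt_three
      linarith
    calc Real.exp 1 ^ 2 * ((n:ℝ) * r) = (Real.exp 1 * Real.exp 1) * ((n:ℝ) * r) := by ring
      _ ≤ (2 * π * Real.exp 1) * ((n:ℝ) * r) := by
          apply mul_le_mul_of_nonneg_right _ (by positivity)
          exact mul_le_mul_of_nonneg_right (le_of_lt he) (le_of_lt (Real.exp_pos 1))
  -- main bound restated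
  have hmain : ∀ q : ℝ, 2 < q → L ≤ P *
      Real.exp ((n : ℝ) * ((1 - 1/q) * Psi r
        + (1/q) * Real.log (1 + (2 * π) ^ (-q/2) * zetaReal (q/2))) - (n:ℝ) * Delta r) := by
    intro q hq
    have := main_bound n r hn hr p hp μ q hq
    rw [← hL] at this
    refine this.trans (le_of_eq ?_)
    have e1 : Real.exp (-((n:ℝ) * (Delta r + μ)))
        = Real.exp (-((n:ℝ) * Delta r)) * Real.exp (-((n:ℝ) * μ)) := by
      rw [← Real.exp_add]; congr 1; ring
    have e2 : Real.exp ((n : ℝ) * ((1 - 1/q) * Psi r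
          + (1/q) * Real.log (1 + (2 * π) ^ (-q/2) * zetaReal (q/2))) - (n:ℝ) * Delta r)
        = Real.exp ((n : ℝ) * ((1 - 1/q) * Psi r
          + (1/q) * Real.log (1 + (2 * π) ^ (-q/2) * zetaReal (q/2))))
          * Real.exp (-((n:ℝ) * Delta r)) := by
      rw [← Real.exp_add, sub_eq_add_neg]
    rw [hPdef, e1, e2]
    ring
  by_contra hcon
  push_neg at hcon
  have hLP : P < L := lt_of_le_of_lt hPB hcon
  have hL0 : 0 < L := lt_trans hP0 hLP
  set δ : ℝ := Real.log (L / P) / n with hδdef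
  have hδ0 : 0 < δ := by
    apply div_pos _ hn'
    apply Real.log_pos
    rw [lt_div_iff₀ hP0, one_mul]
    exact hLP
  have hDset : {x : ℝ | ∃ q : ℝ, 2 < q ∧
      x = (1 - 1/q) * Psi r + (1/q) * Real.log (1 + (2 * π) ^ (-q/2) * zetaReal (q/2))}.Nonempty := by
    exact ⟨(1 - 1/3) * Psi r + (1/3) * Real.log (1 + (2 * π) ^ (-3/2 : ℝ) * zetaReal ((3:ℝ)/2)),
      3, by norm_num, by norm_num⟩
  have hkey : Delta r + δ ≤ Delta r := by
    conv_rhs => rw [Delta]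
    apply le_csInf hDset
    intro x hx
    obtain ⟨q, hq, rfl⟩ := hx
    have h1 := hmain q hq
    -- L/P ≤ exp (n F q - n Δ)
    have h2 : L / P ≤ Real.exp ((n : ℝ) * ((1 - 1/q) * Psi r
        + (1/q) * Real.log (1 + (2 * π) ^ (-q/2) * zetaReal (q/2))) - (n:ℝ) * Delta r) := by
      rw [div_le_iff₀ hP0]
      linarith [h1]
    have h3 : Real.exp ((n:ℝ) * δ) = L / P := by
      rw [hδdef, mul_div_cancel₀ _ (ne_of_gt hn')]
      exact Real.exp_log (div_pos hL0 hP0)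
    rw [← h3] at h2
    rw [Real.exp_le_exp] at h2
    have h4 : (n:ℝ) * (Delta r + δ) ≤ (n:ℝ) * ((1 - 1/q) * Psi r
        + (1/q) * Real.log (1 + (2 * π) ^ (-q/2) * zetaReal (q/2))) := by linarith
    exact le_of_mul_le_mul_left h4 hn'
  linarith
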